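/- Let k be a field of characteristic 0 and A = k[[t]] with maximal ideal m = (t). A k-linear map l : m → k is continuous (for the m-adic topology on m and the discrete topology on k) if and only if there exists ν ≥ 0 and f ∈ t^{-ν}A/A such that l(g) = Res(f · dg) for all g ∈ m. -/

import Mathlib

set_option maxHeartbeats 1000000


/- STATEMENT 2: Let k be a field of characteristic 0 and A = k[[t]] with maximal
ideal m = (t).  A k-linear map l : m → k is continuous (m-adic topology on m,
discrete topology on k) iff there exist ν ≥ 0 and f ∈ t^{-ν}A/A (represented by
a Laurent series f with coeff n f = 0 for n < -ν) such that l(g) = Res(f·dg)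
for all g ∈ m, where Res(Σ aₙ tⁿ dt) = a₋₁. -/

open PowerSeries

namespace ResidueAux

variable {k : Type*} [Field k]

lemma coe_coeff_neg (G : PowerSeries k) {i : ℤ} (hi : i < 0) :
    (HahnSeries.ofPowerSeries ℤ k G).coeff i = 0 := by
  obtain ⟨n, rfl⟩ : ∃ n : ℕ, i = Int.negSucc n :=
    ⟨(-i - 1).toNat, by rw [Int.negSucc_eq]; omega⟩
  rw [HahnSeries.ofPowerSeries_apply, HahnSeries.embDomain_notin_image_support]
  simp

lemma coeff_sum {σ : Type*} (s : Finset σ) (F : σ → LaurentSeries k) (i : ℤ) :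
    (∑ x ∈ s, F x).coeff i = ∑ x ∈ s, (F x).coeff i :=
  map_sum (HahnSeries.coeff.addMonoidHom i) F s

lemma mul_coeff_neg_one (f D : LaurentSeries k) (ν : ℕ)
    (hf : ∀ n : ℤ, n < -(ν : ℤ) → f.coeff n = 0)
    (hD : ∀ n : ℤ, n < 0 → D.coeff n = 0) :
    (f * D).coeff (-1) =
      ∑ n ∈ Finset.range ν, f.coeff (-(n : ℤ) - 1) * D.coeff (n : ℤ) := by
  rw [HahnSeries.coeff_mul]
  refine Finset.sum_bij_ne_zero (fun ij _ _ => ij.2.toNat) ?_ ?_ ?_ ?_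
  · rintro ⟨i, j⟩ hmem hne
    rw [Finset.mem_addAntidiagonal] at hmem
    have h1 : ¬ i < -(ν : ℤ) := fun h => hne (by rw [hf i h, zero_mul])
    have h2 : ¬ j < 0 := fun h => hne (by rw [hD j h, mul_zero])
    have h3 := hmem.2.2
    simp only [Finset.mem_range]
    omega
  · rintro ⟨i, j⟩ hm1 hn1 ⟨i', j'⟩ hm2 hn2 heq
    rw [Finset.mem_addAntidiagonal] at hm1
    rw [Finset.mem_addAntidiagonal] at hm2
    have h2 : ¬ j < 0 := fun h => hn1 (by rw [hD j h, mul_zero])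
    have h2' : ¬ j' < 0 := fun h => hn2 (by rw [hD j' h, mul_zero])
    have h3 := hm1.2.2
    have h3' := hm2.2.2
    simp only at heq
    have hj : j = j' := by omega
    have hi : i = i' := by omega
    simp [hi, hj]
  · intro n hn hg
    refine ⟨(-(n : ℤ) - 1, (n : ℤ)), ?_, ?_, ?_⟩
    · rw [Finset.mem_addAntidiagonal]
      exact ⟨Function.mem_support.mpr (left_ne_zero_of_mul hg),
        Function.mem_support.mpr (right_ne_zero_of_mul hg), by ring⟩
    · exact hg
    · simp
  · rintro ⟨i, j⟩ h₁ h₂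
    rw [Finset.mem_addAntidiagonal] at h₁
    have h2 : ¬ j < 0 := fun h => h₂ (by rw [hD j h, mul_zero])
    have h3 := h₁.2.2
    have hj : ((j.toNat : ℤ)) = j := Int.toNat_of_nonneg (by omega)
    show f.coeff i * D.coeff j = f.coeff (-(j.toNat : ℤ) - 1) * D.coeff (j.toNat : ℤ)
    rw [hj, show -j - 1 = i from by omega]

end ResidueAux

theorem continuous_iff_residue_representation
    (k : Type*) [Field k] [CharZero k]
    (m : Ideal (PowerSeries k)) (hm : m = Ideal.span {X})
    (l : ↥m →ₗ[k] k) :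
    letI : TopologicalSpace (PowerSeries k) := m.adicTopology
    letI : TopologicalSpace k := ⊥
    Continuous l ↔
      ∃ (ν : ℕ) (f : LaurentSeries k),
        (∀ n : ℤ, n < -(ν : ℤ) → f.coeff n = 0) ∧
        ∀ g : ↥m, l g =
          (f * ((PowerSeries.derivativeFun (g : PowerSeries k) :
            PowerSeries k) : LaurentSeries k)).coeff (-1) := by
  letI : TopologicalSpace (PowerSeries k) := m.adicTopology
  letI : TopologicalSpace k := ⊥
  haveI : DiscreteTopology k := ⟨rfl⟩
  show Continuous l ↔ _
  -- membership facts
  have hXmem : ∀ n : ℕ, (X : PowerSeries k) ^ (n + 1) ∈ m := fun n => by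
    rw [hm, Ideal.mem_span_singleton]
    exact dvd_pow_self _ (Nat.succ_ne_zero n)
  have hpow : ∀ (N : ℕ) (g : PowerSeries k),
      g ∈ m ^ N ↔ ∀ i < N, (coeff (R := k) i) g = 0 := by
    intro N g
    rw [hm, Ideal.span_singleton_pow, Ideal.mem_span_singleton, X_pow_dvd_iff]
  have hg0 : ∀ g : ↥m, (coeff (R := k) 0) (g : PowerSeries k) = 0 := by
    intro g
    have h' : (g : PowerSeries k) ∈ Ideal.span {X} := by rw [← hm]; exact g.2
    have h := Ideal.mem_span_singleton.mp h'
    rw [X_dvd_iff] at h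
    rw [coeff_zero_eq_constantCoeff]
    exact h
  -- characterization of continuity
  have hchar : Continuous l ↔
      ∃ N : ℕ, ∀ g : ↥m, (g : PowerSeries k) ∈ m ^ N → l g = 0 := by
    constructor
    · intro hc
      have h0 : l ⁻¹' {0} ∈ nhds (0 : ↥m) := by
        refine hc.continuousAt.preimage_mem_nhds ?_
        rw [mem_nhds_discrete]
        simp
      rw [nhds_induced Subtype.val] at h0
      obtain ⟨t, ht, hsub⟩ := Filter.mem_comap.mp h0
      rw [ZeroMemClass.coe_zero] at ht
      obtain ⟨N, -, hN⟩ := (Ideal.hasBasis_nhds_zero_adic m).mem_iff.mp ht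
      exact ⟨N, fun g hg => hsub (hN hg)⟩
    · rintro ⟨N, hN⟩
      rw [continuous_iff_continuousAt]
      intro x
      unfold ContinuousAt
      rw [nhds_discrete k, Filter.tendsto_pure]
      have hmem : (Subtype.val ⁻¹'
          ((fun y => (x : PowerSeries k) + y) '' ((m ^ N : Ideal (PowerSeries k)) : Set (PowerSeries k))) : Set ↥m) ∈ nhds x := by
        rw [nhds_induced Subtype.val]
        refine Filter.preimage_mem_comap ?_
        exact ((Ideal.hasBasis_nhds_adic m (x : PowerSeries k)).mem_iff).mpr
          ⟨N, trivial, subset_rfl⟩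
      filter_upwards [hmem] with y hy
      obtain ⟨z, hz, hzy⟩ := hy
      have hyx : ((y - x : ↥m) : PowerSeries k) ∈ m ^ N := by
        have h1 : ((y - x : ↥m) : PowerSeries k) = z := by
          push_cast
          rw [← hzy]; ring
        rw [h1]; exact hz
      have h2 : l (y - x) = 0 := hN (y - x) hyx
      have h3 : l y - l x = 0 := by rw [← map_sub]; exact h2
      exact sub_eq_zero.mp h3
  rw [hchar]
  constructor
  · rintro ⟨N, hN⟩
    -- basis elements of m
    set xp : ℕ → ↥m := fun n => ⟨(X : PowerSeries k) ^ (n + 1), hXmem n⟩ with hxp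
    refine ⟨N, ∑ n ∈ Finset.range N,
      HahnSeries.single (-(n : ℤ) - 1) (l (xp n) / ((n : k) + 1)), ?_, ?_⟩
    · intro i hi
      rw [ResidueAux.coeff_sum]
      refine Finset.sum_eq_zero fun n hn => ?_
      rw [Finset.mem_range] at hn
      have : i ≠ -(n : ℤ) - 1 := by omega
      exact HahnSeries.coeff_single_of_ne this
    · intro g
      set G : PowerSeries k := (g : PowerSeries k) with hG
      set D : LaurentSeries k := ((PowerSeries.derivativeFun G : PowerSeries k) : LaurentSeries k)
        with hD
      have hDneg : ∀ n : ℤ, n < 0 → D.coeff n = 0 := fun n hn =>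
        ResidueAux.coe_coeff_neg _ hn
      have hfcoeff : ∀ n : ℤ, n < -(N : ℤ) →
          (∑ n ∈ Finset.range N,
            HahnSeries.single (-(n : ℤ) - 1) (l (xp n) / ((n : k) + 1))).coeff n = 0 := by
        intro i hi
        rw [ResidueAux.coeff_sum]
        refine Finset.sum_eq_zero fun n hn => ?_
        rw [Finset.mem_range] at hn
        have : i ≠ -(n : ℤ) - 1 := by omega
        exact HahnSeries.coeff_single_of_ne this
      rw [ResidueAux.mul_coeff_neg_one _ _ N hfcoeff hDneg]
      -- compute the coefficients of f
      have hfc : ∀ n ∈ Finset.range N,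
          (∑ j ∈ Finset.range N,
            HahnSeries.single (-(j : ℤ) - 1) (l (xp j) / ((j : k) + 1))).coeff (-(n : ℤ) - 1)
          = l (xp n) / ((n : k) + 1) := by
        intro n hn
        rw [ResidueAux.coeff_sum]
        rw [Finset.sum_eq_single n]
        · exact HahnSeries.coeff_single_same _ _
        · intro j hj hjn
          refine HahnSeries.coeff_single_of_ne ?_
          intro h
          exact hjn (by omega)
        · intro h; exact absurd hn h
      have hDc : ∀ n : ℕ, D.coeff (n : ℤ) = ((n : k) + 1) * (coeff (R := k) (n + 1)) G := by
        intro n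
        rw [hD, HahnSeries.ofPowerSeries_apply_coeff, (show coeff (R := k) n G.derivativeFun = coeff (n + 1) G * (n + 1) from coeff_derivative G n)]
        ring
      -- decompose g
      set T : ↥m := ∑ n ∈ Finset.range N, (coeff (R := k) (n + 1)) G • xp n with hT
      have hcoeT : ∀ i : ℕ, 1 ≤ i → i ≤ N →
          (coeff (R := k) i) (T : PowerSeries k) = (coeff (R := k) i) G := by
        intro i hi1 hiN
        have hTc : (T : PowerSeries k)
            = ∑ n ∈ Finset.range N, (coeff (R := k) (n + 1)) G • (X : PowerSeries k) ^ (n + 1) := by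
          rw [hT]
          push_cast
          rfl
        rw [hTc, map_sum]
        rw [Finset.sum_eq_single (i - 1)]
        · rw [LinearMap.map_smul, smul_eq_mul, coeff_X_pow]
          rw [if_pos (by omega)]
          rw [mul_one]
          have heq : i - 1 + 1 = i := by omega
          rw [heq]
        · intro j hj hji
          rw [LinearMap.map_smul, smul_eq_mul, coeff_X_pow, if_neg (by omega), mul_zero]
        · intro h
          exact absurd (Finset.mem_range.mpr (by omega)) h
      have hcoeT0 : (coeff (R := k) 0) (T : PowerSeries k) = 0 := by
        have hTc : (T : PowerSeries k)
            = ∑ n ∈ Finset.range N, (coeff (R := k) (n + 1)) G • (X : PowerSeries k) ^ (n + 1) := by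
          rw [hT]
          push_cast
          rfl
        rw [hTc, map_sum]
        refine Finset.sum_eq_zero fun n hn => ?_
        rw [LinearMap.map_smul, smul_eq_mul, coeff_X_pow, if_neg (by omega), mul_zero]
      have hrem : ((g - T : ↥m) : PowerSeries k) ∈ m ^ N := by
        rw [hpow]
        intro i hiN
        push_cast
        rw [map_sub]
        rcases Nat.eq_zero_or_pos i with h0 | h1
        · rw [h0, hg0 g, hcoeT0, sub_self]
        · rw [hcoeT i h1 (le_of_lt hiN), sub_self]
      have hlg : l g = l T := by
        have h := hN (g - T) hrem
        rw [map_sub] at h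
        exact sub_eq_zero.mp h
      rw [hlg, hT, map_sum]
      refine Finset.sum_congr rfl fun n hn => ?_
      rw [hfc n hn, hDc n, map_smul, smul_eq_mul]
      have hne : ((n : k) + 1) ≠ 0 := by
        have : ((n + 1 : ℕ) : k) ≠ 0 := Nat.cast_ne_zero.mpr (Nat.succ_ne_zero n)
        push_cast at this
        exact this
      field_simp
  · rintro ⟨ν, f, hf, hrep⟩
    refine ⟨ν + 1, fun g hg => ?_⟩
    rw [hrep g]
    set G : PowerSeries k := (g : PowerSeries k) with hG
    have hDneg : ∀ n : ℤ, n < 0 →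
        ((PowerSeries.derivativeFun G : PowerSeries k) : LaurentSeries k).coeff n = 0 :=
      fun n hn => ResidueAux.coe_coeff_neg _ hn
    rw [ResidueAux.mul_coeff_neg_one _ _ ν hf hDneg]
    refine Finset.sum_eq_zero fun n hn => ?_
    rw [Finset.mem_range] at hn
    have hc : (coeff (R := k) (n + 1)) G = 0 := (hpow (ν + 1) G).mp hg (n + 1) (by omega)
    rw [HahnSeries.ofPowerSeries_apply_coeff, (show coeff (R := k) n G.derivativeFun = coeff (n + 1) G * (n + 1) from coeff_derivative G n), hc, zero_mul, mul_zero]
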